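/- Let N ≥ 2 and let x ∈ ℂ^N satisfy x[1] ≠ 0. Then the system of 4N−4 linear equations trace(ψ_{m,n} ψ_{m,n}* · X) = |⟨x, ψ_{m,n}⟩|² (m = 1,…,4; n = 1,…,N−1) has a unique solution in the cone of Hermitian positive semidefinite N×N matrices, namely X = x x*. (Corollary 1, part Ψ: exact recovery of x, up to a unimodular constant, by the PhaseLift semidefinite program from the 4N−4 deterministic Ψ-measurements.) -/

import Mathlib

open Complex Matrix MeasureTheory

noncomputable section

/-- α = √((1 − 1/√3)/2) -/
def alph : ℂ := (Real.sqrt ((1 - 1/Real.sqrt 3)/2) : ℝ)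

/-- β = e^{i5π/4}·√((1 + 1/√3)/2) -/
def beta : ℂ := Complex.exp (Complex.I * (5 * (Real.pi : ℂ) / 4)) *
  (Real.sqrt ((1 + 1/Real.sqrt 3)/2) : ℝ)

/-- the four frame vectors a₁ = (α,β), a₂ = (β,α), a₃ = (α,−β), a₄ = (−β,α) in ℂ² -/
def coef : Fin 4 → Fin 2 → ℂ := ![![alph, beta], ![beta, alph], ![alph, -beta], ![-beta, alph]]

/-- inner product ⟨x,y⟩ = Σ x[n]·conj(y[n]) -/
def inn {N : ℕ} (x y : Fin N → ℂ) : ℂ := ∑ i, x i * (starRingEnd ℂ) (y i)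

/-- Euclidean norm ‖x‖ = √⟨x,x⟩ -/
def nrm {N : ℕ} (x : Fin N → ℂ) : ℝ := Real.sqrt (inn x x).re

/-- outer product x y* -/
def outer {N : ℕ} (x y : Fin N → ℂ) : Matrix (Fin N) (Fin N) ℂ :=
  fun i j => x i * (starRingEnd ℂ) (y j)

/-- measurement vectors φ_{m,n} (0-based n: nonzero entries at positions n and n+1) -/
def phiv (N : ℕ) (m : Fin 4) (n : ℕ) : Fin N → ℂ :=
  fun i => if (i : ℕ) = n then coef m 0 else if (i : ℕ) = n + 1 then coef m 1 else 0

/-- measurement vectors ψ_{m,n} (0-based n: nonzero entries at positions 0 and n+1) -/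
def psiv (N : ℕ) (m : Fin 4) (n : ℕ) : Fin N → ℂ :=
  fun i => if (i : ℕ) = 0 then coef m 0 else if (i : ℕ) = n + 1 then coef m 1 else 0

/-- Hilbert–Schmidt inner product ⟨X,Y⟩ = trace(Y*X) -/
def hs {N : ℕ} (X Y : Matrix (Fin N) (Fin N) ℂ) : ℂ := Matrix.trace (Yᴴ * X)

/-- Frobenius (Hilbert–Schmidt) norm -/
def frob {N : ℕ} (X : Matrix (Fin N) (Fin N) ℂ) : ℝ := Real.sqrt (Matrix.trace (Xᴴ * X)).re

/-- spectral norm (largest singular value) -/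
def specNorm {N : ℕ} (A : Matrix (Fin N) (Fin N) ℂ) : ℝ :=
  sSup {r : ℝ | ∃ v : Fin N → ℂ, nrm v ≤ 1 ∧ r = nrm (A.mulVec v)}
open scoped ComplexOrder
lemma sqrt3_pos : (0:ℝ) < Real.sqrt 3 := Real.sqrt_pos.mpr (by norm_num)

lemma inv_sqrt3_lt_one : 1 / Real.sqrt 3 < 1 := by
  rw [div_lt_one sqrt3_pos]
  nlinarith [Real.sq_sqrt (by norm_num : (3:ℝ) ≥ 0), Real.sqrt_nonneg 3]

lemma inv_sqrt3_pos : 0 < 1 / Real.sqrt 3 := by positivity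

lemma conj_alph : (starRingEnd ℂ) alph = alph := Complex.conj_ofReal _

lemma alph_sq : alph ^ 2 = (((1 - 1/Real.sqrt 3)/2 : ℝ) : ℂ) := by
  unfold alph
  rw [← Complex.ofReal_pow, Real.sq_sqrt (by nlinarith [inv_sqrt3_lt_one] : ((1 - 1/Real.sqrt 3)/2 : ℝ) ≥ 0)]

lemma alph_ne : alph ≠ 0 := by
  unfold alph
  simp only [ne_eq, Complex.ofReal_eq_zero]
  exact Real.sqrt_ne_zero'.mpr (by nlinarith [inv_sqrt3_lt_one])

lemma conj_beta : (starRingEnd ℂ) beta =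
    Complex.exp (-(Complex.I * (5 * (Real.pi : ℂ) / 4))) *
      (Real.sqrt ((1 + 1/Real.sqrt 3)/2) : ℝ) := by
  unfold beta
  rw [_root_.map_mul, ← Complex.exp_conj, Complex.conj_ofReal]
  congr 2
  rw [_root_.map_mul, map_div₀, _root_.map_mul, Complex.conj_I, Complex.conj_ofReal]
  norm_num
  rw [(by norm_num : (5:ℂ) = ((5:ℝ):ℂ)), (by norm_num : (4:ℂ) = ((4:ℝ):ℂ)), Complex.conj_ofReal, Complex.conj_ofReal]

lemma rsq : ((Real.sqrt ((1 + 1/Real.sqrt 3)/2) : ℝ) : ℂ) * ((Real.sqrt ((1 + 1/Real.sqrt 3)/2) : ℝ) : ℂ)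
    = (((1 + 1/Real.sqrt 3)/2 : ℝ) : ℂ) := by
  rw [← Complex.ofReal_mul, Real.mul_self_sqrt (by positivity)]

lemma beta_mul_conj : beta * (starRingEnd ℂ) beta = (((1 + 1/Real.sqrt 3)/2 : ℝ) : ℂ) := by
  rw [conj_beta]
  unfold beta
  calc Complex.exp (Complex.I * (5 * (Real.pi : ℂ) / 4)) * (Real.sqrt ((1 + 1/Real.sqrt 3)/2) : ℝ) *
      (Complex.exp (-(Complex.I * (5 * (Real.pi : ℂ) / 4))) * (Real.sqrt ((1 + 1/Real.sqrt 3)/2) : ℝ))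
      = (Complex.exp (Complex.I * (5 * (Real.pi : ℂ) / 4)) * Complex.exp (-(Complex.I * (5 * (Real.pi : ℂ) / 4)))) *
        ((Real.sqrt ((1 + 1/Real.sqrt 3)/2) : ℝ) * (Real.sqrt ((1 + 1/Real.sqrt 3)/2) : ℝ)) := by ring
    _ = (((1 + 1/Real.sqrt 3)/2 : ℝ) : ℂ) := by
        rw [← Complex.exp_add, rsq]
        norm_num

lemma exp_sq : Complex.exp (Complex.I * (5 * (Real.pi : ℂ) / 4)) ^ 2 = Complex.I := by
  rw [← Complex.exp_nat_mul]
  have : ((2:ℕ):ℂ) * (Complex.I * (5 * (Real.pi : ℂ) / 4)) = (Real.pi/2 : ℂ) * Complex.I + 2 * Real.pi * Complex.I := by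
    push_cast; ring
  rw [this, Complex.exp_add, Complex.exp_two_pi_mul_I, mul_one, Complex.exp_mul_I]
  push_cast
  rw [← Complex.ofReal_ofNat, ← Complex.ofReal_div, ← Complex.ofReal_cos, ← Complex.ofReal_sin,
    Real.cos_pi_div_two, Real.sin_pi_div_two]
  norm_num

lemma beta_sq_sub : beta ^ 2 - ((starRingEnd ℂ) beta) ^ 2 =
    2 * Complex.I * (((1 + 1/Real.sqrt 3)/2 : ℝ) : ℂ) := by
  have h2 : ((starRingEnd ℂ) beta) ^ 2 = (starRingEnd ℂ) (beta ^ 2) := by rw [map_pow]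
  have hb2 : beta ^ 2 = Complex.I * (((1 + 1/Real.sqrt 3)/2 : ℝ) : ℂ) := by
    unfold beta
    rw [mul_pow, exp_sq, ← Complex.ofReal_pow, sq, Real.mul_self_sqrt (by positivity)]
  rw [h2, hb2, _root_.map_mul, Complex.conj_I, Complex.conj_ofReal]
  ring
lemma trace_outer_mul {N : ℕ} (f g : Fin N → ℂ) (X : Matrix (Fin N) (Fin N) ℂ) :
    Matrix.trace (outer f g * X) = ∑ i, ∑ j, f i * (starRingEnd ℂ) (g j) * X j i := by
  simp [Matrix.trace, Matrix.mul_apply, outer, Matrix.diag]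

lemma psiv_eq {N : ℕ} (m : Fin 4) (n : ℕ) (h : n + 1 < N) :
    psiv N m n = fun i => (if i = (⟨0, by omega⟩ : Fin N) then coef m 0 else 0)
      + (if i = (⟨n+1, h⟩ : Fin N) then coef m 1 else 0) := by
  funext i
  rcases i with ⟨iv, hi⟩
  simp only [psiv, Fin.mk.injEq]
  by_cases h0 : iv = 0 <;> by_cases h1 : iv = n+1 <;> simp [h0, h1] <;> omega

lemma trace_psiv {N : ℕ} (m : Fin 4) (n : ℕ) (h : n + 1 < N) (hN : 0 < N)
    (X : Matrix (Fin N) (Fin N) ℂ) :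
    Matrix.trace (outer (psiv N m n) (psiv N m n) * X) =
      coef m 0 * (starRingEnd ℂ) (coef m 0) * X ⟨0, hN⟩ ⟨0, hN⟩
    + coef m 0 * (starRingEnd ℂ) (coef m 1) * X ⟨n+1, h⟩ ⟨0, hN⟩
    + coef m 1 * (starRingEnd ℂ) (coef m 0) * X ⟨0, hN⟩ ⟨n+1, h⟩
    + coef m 1 * (starRingEnd ℂ) (coef m 1) * X ⟨n+1, h⟩ ⟨n+1, h⟩ := by
  rw [trace_outer_mul, psiv_eq m n h]
  have hne : (⟨0, hN⟩ : Fin N) ≠ ⟨n+1, h⟩ := by simp [Fin.ext_iff]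
  simp only [map_add, apply_ite (starRingEnd ℂ), map_zero, add_mul, mul_add, ite_mul, mul_ite,
    zero_mul, mul_zero, zero_add, add_zero, Finset.sum_add_distrib, Finset.sum_ite_eq',
    Finset.mem_univ, if_true]
  ring
lemma trace_outer_outer {N : ℕ} (ψ x : Fin N → ℂ) :
    Matrix.trace (outer ψ ψ * outer x x) = ((‖inn x ψ‖ ^ 2 : ℝ) : ℂ) := by
  rw [trace_outer_mul]
  have : ∑ i, ∑ j, ψ i * (starRingEnd ℂ) (ψ j) * outer x x j i
      = (∑ i, ψ i * (starRingEnd ℂ) (x i)) * (∑ j, (starRingEnd ℂ) (ψ j) * x j) := by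
    rw [Finset.sum_mul_sum]
    apply Finset.sum_congr rfl; intro i _
    apply Finset.sum_congr rfl; intro j _
    simp [outer]; ring
  rw [this]
  have h1 : (∑ i, ψ i * (starRingEnd ℂ) (x i)) = (starRingEnd ℂ) (inn x ψ) := by
    simp [inn, map_sum]; apply Finset.sum_congr rfl; intro i _; ring
  have h2 : (∑ j, (starRingEnd ℂ) (ψ j) * x j) = inn x ψ := by
    simp [inn]; apply Finset.sum_congr rfl; intro j _; ring
  rw [h1, h2, Complex.sq_norm, ← Complex.normSq_eq_conj_mul_self]

lemma outer_posSemidef {N : ℕ} (x : Fin N → ℂ) : (outer x x).PosSemidef := by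
  refine Matrix.PosSemidef.of_dotProduct_mulVec_nonneg ?_ ?_
  · ext i j
    simp [Matrix.conjTranspose_apply, outer, mul_comm]
  · intro v
    have : (star v) ⬝ᵥ (outer x x).mulVec v
        = (starRingEnd ℂ) (∑ j, (starRingEnd ℂ) (x j) * v j) * (∑ j, (starRingEnd ℂ) (x j) * v j) := by
      simp only [dotProduct, Matrix.mulVec, outer, Pi.star_apply, RCLike.star_def]
      rw [map_sum, Finset.sum_mul_sum]
      apply Finset.sum_congr rfl; intro i _
      rw [Finset.mul_sum]
      apply Finset.sum_congr rfl; intro j _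
      simp; ring
    rw [this, ← Complex.normSq_eq_conj_mul_self]
    exact_mod_cast Complex.normSq_nonneg _
lemma beta_ne : beta ≠ 0 := by
  intro h
  have := beta_mul_conj
  rw [h] at this
  simp only [zero_mul] at this
  have : ((1 + 1/Real.sqrt 3)/2 : ℝ) = 0 := by exact_mod_cast this.symm
  nlinarith [inv_sqrt3_pos]

lemma conj_beta_ne : (starRingEnd ℂ) beta ≠ 0 := by
  simpa using beta_ne

lemma det_ne : alph^2 * alph^2 - (beta * (starRingEnd ℂ) beta) * (beta * (starRingEnd ℂ) beta) ≠ 0 := by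
  rw [alph_sq, beta_mul_conj]
  have : (((1 - 1/Real.sqrt 3)/2 : ℝ) : ℂ) * (((1 - 1/Real.sqrt 3)/2 : ℝ) : ℂ)
      - (((1 + 1/Real.sqrt 3)/2 : ℝ) : ℂ) * (((1 + 1/Real.sqrt 3)/2 : ℝ) : ℂ)
      = ((-(1/Real.sqrt 3) : ℝ) : ℂ) := by push_cast; ring
  rw [this]
  simp only [ne_eq, Complex.ofReal_eq_zero, neg_eq_zero]
  nlinarith [inv_sqrt3_pos]

lemma bsq_ne : beta * beta - (starRingEnd ℂ) beta * (starRingEnd ℂ) beta ≠ 0 := by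
  have h : beta * beta - (starRingEnd ℂ) beta * (starRingEnd ℂ) beta
      = 2 * Complex.I * (((1 + 1/Real.sqrt 3)/2 : ℝ) : ℂ) := by
    have := beta_sq_sub; linear_combination this
  rw [h]
  simp only [ne_eq, mul_eq_zero, Complex.I_ne_zero, Complex.ofReal_eq_zero, false_or]
  push_neg
  constructor
  · norm_num
  · nlinarith [inv_sqrt3_pos]

lemma solve4 (y00 yk0 y0k ykk : ℂ)
    (E0 : alph * alph * y00 + alph * (starRingEnd ℂ) beta * yk0 + beta * alph * y0k
      + beta * (starRingEnd ℂ) beta * ykk = 0)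
    (E1 : beta * (starRingEnd ℂ) beta * y00 + beta * alph * yk0 + alph * (starRingEnd ℂ) beta * y0k
      + alph * alph * ykk = 0)
    (E2 : alph * alph * y00 - alph * (starRingEnd ℂ) beta * yk0 - beta * alph * y0k
      + beta * (starRingEnd ℂ) beta * ykk = 0)
    (E3 : beta * (starRingEnd ℂ) beta * y00 - beta * alph * yk0 - alph * (starRingEnd ℂ) beta * y0k
      + alph * alph * ykk = 0) :
    y00 = 0 ∧ yk0 = 0 ∧ y0k = 0 ∧ ykk = 0 := by
  set A := alph
  set B := beta
  set B' := (starRingEnd ℂ) beta with hB'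
  have h00 : (A^2 * A^2 - (B*B') * (B*B')) * y00 = 0 := by
    linear_combination (A*A/2) * E0 + (A*A/2) * E2 - (B*B'/2) * E1 - (B*B'/2) * E3
  have hkk : (A^2 * A^2 - (B*B') * (B*B')) * ykk = 0 := by
    linear_combination (A*A/2) * E1 + (A*A/2) * E3 - (B*B'/2) * E0 - (B*B'/2) * E2
  have hy00 : y00 = 0 := by
    rcases mul_eq_zero.mp h00 with h | h
    · exact absurd h det_ne
    · exact h
  have hykk : ykk = 0 := by
    rcases mul_eq_zero.mp hkk with h | h
    · exact absurd h det_ne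
    · exact h
  have h3' : A * (B' * yk0 + B * y0k) = 0 := by linear_combination (1/2) * E0 - (1/2) * E2
  have h4' : A * (B * yk0 + B' * y0k) = 0 := by linear_combination (1/2) * E1 - (1/2) * E3
  have h3 : B' * yk0 + B * y0k = 0 := by
    rcases mul_eq_zero.mp h3' with h | h
    · exact absurd h alph_ne
    · exact h
  have h4 : B * yk0 + B' * y0k = 0 := by
    rcases mul_eq_zero.mp h4' with h | h
    · exact absurd h alph_ne
    · exact h
  have h5 : (B * B - B' * B') * y0k = 0 := by linear_combination B * h3 - B' * h4
  have hy0k : y0k = 0 := by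
    rcases mul_eq_zero.mp h5 with h | h
    · exact absurd h bsq_ne
    · exact h
  have hyk0 : yk0 = 0 := by
    have : B' * yk0 = 0 := by linear_combination h3 - B * hy0k
    rcases mul_eq_zero.mp this with h | h
    · exact absurd h conj_beta_ne
    · exact h
  exact ⟨hy00, hyk0, hy0k, hykk⟩
lemma quad_expand {N : ℕ} (X : Matrix (Fin N) (Fin N) ℂ) (z i j : Fin N) (u0 ui uj : ℂ) :
    star (u0 • (Pi.single z 1 : Fin N → ℂ) + ui • (Pi.single i 1 : Fin N → ℂ)
        + uj • (Pi.single j 1 : Fin N → ℂ)) ⬝ᵥ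
      X.mulVec (u0 • (Pi.single z 1 : Fin N → ℂ) + ui • (Pi.single i 1 : Fin N → ℂ)
        + uj • (Pi.single j 1 : Fin N → ℂ))
    = (starRingEnd ℂ) u0 * X z z * u0 + (starRingEnd ℂ) u0 * X z i * ui
    + (starRingEnd ℂ) u0 * X z j * uj + (starRingEnd ℂ) ui * X i z * u0
    + (starRingEnd ℂ) ui * X i i * ui + (starRingEnd ℂ) ui * X i j * uj
    + (starRingEnd ℂ) uj * X j z * u0 + (starRingEnd ℂ) uj * X j i * ui
    + (starRingEnd ℂ) uj * X j j * uj := by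
  have hsingle : ∀ (p q : Fin N), (Pi.single p (1:ℂ) : Fin N → ℂ) ⬝ᵥ X.mulVec (Pi.single q 1) = X p q := by
    intro p q
    simp [Matrix.mulVec_single, single_dotProduct]
  have hstar : ∀ (p : Fin N), star (Pi.single p (1:ℂ) : Fin N → ℂ) = Pi.single p 1 := by
    intro p
    funext l
    rcases eq_or_ne l p with h | h <;> simp [h, Pi.single_apply]
  simp only [star_add, star_smul, Matrix.mulVec_add, Matrix.mulVec_smul, add_dotProduct,
    smul_dotProduct, dotProduct_add, dotProduct_smul, smul_eq_mul, hstar,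
    hsingle, RCLike.star_def]
  ring
lemma offdiag {N : ℕ} (X : Matrix (Fin N) (Fin N) ℂ) (hX : X.PosSemidef) (x : Fin N → ℂ)
    (z i j : Fin N) (hx0 : x z ≠ 0)
    (hzz : X z z = x z * (starRingEnd ℂ) (x z))
    (hzi' : X z i = x z * (starRingEnd ℂ) (x i))
    (hzj' : X z j = x z * (starRingEnd ℂ) (x j))
    (hiz : X i z = x i * (starRingEnd ℂ) (x z))
    (hjz : X j z = x j * (starRingEnd ℂ) (x z))
    (hii : X i i = x i * (starRingEnd ℂ) (x i))
    (hjj : X j j = x j * (starRingEnd ℂ) (x j)) :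
    X i j = x i * (starRingEnd ℂ) (x j) := by
  set w : ℂ := X i j - x i * (starRingEnd ℂ) (x j) with hw
  have hij : X i j = x i * (starRingEnd ℂ) (x j) + w := by rw [hw]; ring
  have hji : X j i = x j * (starRingEnd ℂ) (x i) + (starRingEnd ℂ) w := by
    have : X j i = (starRingEnd ℂ) (X i j) := by
      conv_lhs => rw [← hX.1]
      simp [Matrix.conjTranspose_apply]
    rw [this, hij]
    simp only [map_sub, map_add, _root_.map_mul, Complex.conj_conj]
    ring
  suffices hww : w = 0 by linear_combination hww
  set u0 : ℂ := ((starRingEnd ℂ) (x i) * w - (starRingEnd ℂ) (x j)) / (starRingEnd ℂ) (x z) with hu0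
  have hczne : (starRingEnd ℂ) (x z) ≠ 0 := by simpa using hx0
  have hq := hX.dotProduct_mulVec_nonneg (u0 • (Pi.single z 1 : Fin N → ℂ) + (-w) • (Pi.single i 1 : Fin N → ℂ)
      + (1:ℂ) • (Pi.single j 1 : Fin N → ℂ))
  replace hq := hq.trans_eq (quad_expand X z i j u0 (-w) 1)
  have hval : (starRingEnd ℂ) u0 * X z z * u0 + (starRingEnd ℂ) u0 * X z i * (-w)
    + (starRingEnd ℂ) u0 * X z j * 1 + (starRingEnd ℂ) (-w) * X i z * u0
    + (starRingEnd ℂ) (-w) * X i i * (-w) + (starRingEnd ℂ) (-w) * X i j * 1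
    + (starRingEnd ℂ) 1 * X j z * u0 + (starRingEnd ℂ) 1 * X j i * (-w)
    + (starRingEnd ℂ) 1 * X j j * 1 = ((-2 * Complex.normSq w : ℝ) : ℂ) := by
    have hrhs : ((-2 * Complex.normSq w : ℝ) : ℂ) = -2 * ((starRingEnd ℂ) w * w) := by
      push_cast [Complex.normSq_eq_conj_mul_self]
      ring
    rw [hrhs, hzz, hzi', hzj', hiz, hjz, hii, hjj, hij, hji, hu0]
    simp only [map_neg, _root_.map_one, map_div₀, map_sub, _root_.map_mul, Complex.conj_conj]
    field_simp
    ring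
  rw [hval] at hq
  have h1 : (0:ℝ) ≤ -2 * Complex.normSq w := by exact_mod_cast hq
  have h2 : Complex.normSq w = 0 := by nlinarith [Complex.normSq_nonneg w]
  exact Complex.normSq_eq_zero.mp h2
lemma c00 : coef 0 0 = alph := rfl
lemma c01 : coef 0 1 = beta := rfl
lemma c10 : coef 1 0 = beta := rfl
lemma c11 : coef 1 1 = alph := rfl
lemma c20 : coef 2 0 = alph := rfl
lemma c21 : coef 2 1 = -beta := rfl
lemma c30 : coef 3 0 = -beta := rfl
lemma c31 : coef 3 1 = alph := rfl

/-- Corollary 1 (part Ψ): for x ∈ S_Ψ, X = xx* is the unique Hermitian PSD solution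
of the 4N−4 linear equations trace(ψ_{m,n} ψ_{m,n}*·X) = |⟨x,ψ_{m,n}⟩|². -/
theorem phaselift_unique_Psi (N : ℕ) (hN : 2 ≤ N) (x : Fin N → ℂ)
    (hx : x ⟨0, by omega⟩ ≠ 0) :
    ((outer x x).PosSemidef ∧
      ∀ (m : Fin 4) (n : ℕ), n + 1 < N →
        Matrix.trace (outer (psiv N m n) (psiv N m n) * outer x x)
          = ((‖inn x (psiv N m n)‖ ^ 2 : ℝ) : ℂ)) ∧
    (∀ X : Matrix (Fin N) (Fin N) ℂ, X.PosSemidef →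
      (∀ (m : Fin 4) (n : ℕ), n + 1 < N →
        Matrix.trace (outer (psiv N m n) (psiv N m n) * X)
          = ((‖inn x (psiv N m n)‖ ^ 2 : ℝ) : ℂ)) →
      X = outer x x) := by
  have h0N : 0 < N := by omega
  refine ⟨⟨outer_posSemidef x, fun m n _ => trace_outer_outer _ _⟩, ?_⟩
  intro X hX hmeas
  set z : Fin N := ⟨0, h0N⟩ with hz
  have hxz : x z ≠ 0 := hx
  have hent : ∀ (k : Fin N), (k : ℕ) ≠ 0 →
      X z z = x z * (starRingEnd ℂ) (x z) ∧
      X k z = x k * (starRingEnd ℂ) (x z) ∧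
      X z k = x z * (starRingEnd ℂ) (x k) ∧
      X k k = x k * (starRingEnd ℂ) (x k) := by
    intro k hk
    have hk1 : (k : ℕ) = ((k : ℕ) - 1) + 1 := by omega
    set n : ℕ := (k : ℕ) - 1 with hn
    have h : n + 1 < N := by omega
    have hkk : k = ⟨n+1, h⟩ := Fin.ext hk1
    have key : ∀ m : Fin 4,
        coef m 0 * (starRingEnd ℂ) (coef m 0) * (X z z - x z * (starRingEnd ℂ) (x z))
      + coef m 0 * (starRingEnd ℂ) (coef m 1) *
          (X ⟨n+1, h⟩ z - x ⟨n+1, h⟩ * (starRingEnd ℂ) (x z))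
      + coef m 1 * (starRingEnd ℂ) (coef m 0) *
          (X z ⟨n+1, h⟩ - x z * (starRingEnd ℂ) (x ⟨n+1, h⟩))
      + coef m 1 * (starRingEnd ℂ) (coef m 1) *
          (X ⟨n+1, h⟩ ⟨n+1, h⟩ - x ⟨n+1, h⟩ * (starRingEnd ℂ) (x ⟨n+1, h⟩)) = 0 := by
      intro m
      have h3 : Matrix.trace (outer (psiv N m n) (psiv N m n) * X)
          = Matrix.trace (outer (psiv N m n) (psiv N m n) * outer x x) := by
        rw [hmeas m n h, trace_outer_outer]
      rw [trace_psiv m n h h0N X, trace_psiv m n h h0N (outer x x)] at h3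
      simp only [outer] at h3
      linear_combination h3
    have E0 := key 0
    have E1 := key 1
    have E2 := key 2
    have E3 := key 3
    rw [c00, c01] at E0
    rw [c10, c11] at E1
    rw [c20, c21] at E2
    rw [c30, c31] at E3
    rw [conj_alph] at E0 E1 E2 E3
    simp only [map_neg] at E2 E3
    obtain ⟨a, b, c, d⟩ := solve4
      (X z z - x z * (starRingEnd ℂ) (x z))
      (X ⟨n+1, h⟩ z - x ⟨n+1, h⟩ * (starRingEnd ℂ) (x z))
      (X z ⟨n+1, h⟩ - x z * (starRingEnd ℂ) (x ⟨n+1, h⟩))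
      (X ⟨n+1, h⟩ ⟨n+1, h⟩ - x ⟨n+1, h⟩ * (starRingEnd ℂ) (x ⟨n+1, h⟩))
      (by linear_combination E0) (by linear_combination E1)
      (by linear_combination E2) (by linear_combination E3)
    refine ⟨sub_eq_zero.mp a, ?_, ?_, ?_⟩
    · rw [hkk]; exact sub_eq_zero.mp b
    · rw [hkk]; exact sub_eq_zero.mp c
    · rw [hkk]; exact sub_eq_zero.mp d
  have hzz : X z z = x z * (starRingEnd ℂ) (x z) :=
    (hent ⟨1, by omega⟩ (by simp)).1
  ext i j
  show X i j = outer x x i j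
  rw [outer]
  by_cases hi : (i : ℕ) = 0
  · have hiz : i = z := Fin.ext hi
    subst hiz
    by_cases hj : (j : ℕ) = 0
    · have hjz : j = z := Fin.ext hj
      subst hjz
      exact hzz
    · exact (hent j hj).2.2.1
  · by_cases hj : (j : ℕ) = 0
    · have hjz : j = z := Fin.ext hj
      subst hjz
      exact (hent i hi).2.1
    · by_cases hij : i = j
      · subst hij
        exact (hent i hi).2.2.2
      · exact offdiag X hX x z i j hxz hzz
          ((hent i hi).2.2.1) ((hent j hj).2.2.1)
          ((hent i hi).2.1) ((hent j hj).2.1)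
          ((hent i hi).2.2.2) ((hent j hj).2.2.2)
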